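/- arXiv:2409.18133 — 3 statements merged into one kernel-verified Lean document; each statement's English description precedes it below -/
import Mathlib

section
/- For every continuous function f : Ω → ℝ: |f∘σ − f|_∞ = |Kf − f|_∞ ≥ ‖[D, π(M_f)]‖ ≥ |f − Lf|_∞. Moreover, if f does not depend on the first coordinate (i.e. f(0x) = f(1x) for all x ∈ Ω), then |Kf − f|_∞ = ‖[D, π(M_f)]‖ = |f − Lf|_∞. -/
open MeasureTheory ContinuousLinearMap
open scoped RealInnerProductSpace InnerProductSpace ENNReal

noncomputable section

/-- The shift space `Ω = {0,1}^ℕ`, with `false` playing the role of the symbol `0`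
and `true` of the symbol `1`. -/
abbrev Ω : Type := ℕ → Bool

/-- The shift map `σ`, `σ(x)ₙ = x_{n+1}`. -/
def shiftMap : Ω → Ω := fun x n => x (n + 1)

/-- Prepending a symbol: `consSeq a x = ax`. -/
def consSeq (a : Bool) (x : Ω) : Ω := fun n => Nat.casesOn n a (fun k => x k)

/-- The cylinder set `[w]` of sequences beginning with the finite word `w`. -/
def cylinder (w : List Bool) : Set Ω := {x | ∀ i : Fin w.length, x (i : ℕ) = w.get i}

/-- The Hilbert space `L²(μ)` (real). -/
abbrev E (μ : Measure Ω) := Lp (α := Ω) ℝ 2 μ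

/-- The Hilbert space `H = L²(μ) × L²(μ)` with the norm `√(‖φ‖² + ‖ψ‖²)`. -/
abbrev HS (μ : Measure Ω) := WithLp 2 (E μ × E μ)

variable {μ : Measure Ω}

/-- The diagonal block operator `(φ, ψ) ↦ (A₁φ, A₂ψ)` on `H`. -/
def blockDiag (A₁ A₂ : E μ →L[ℝ] E μ) : HS μ →L[ℝ] HS μ :=
  ((WithLp.prodContinuousLinearEquiv 2 ℝ (E μ) (E μ)).symm.toContinuousLinearMap).comp
    (((A₁.comp (ContinuousLinearMap.fst ℝ (E μ) (E μ))).prod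
        (A₂.comp (ContinuousLinearMap.snd ℝ (E μ) (E μ)))).comp
      (WithLp.prodContinuousLinearEquiv 2 ℝ (E μ) (E μ)).toContinuousLinearMap)

/-- The antidiagonal block operator `(φ, ψ) ↦ (A₁ψ, A₂φ)` on `H`. -/
def blockAntidiag (A₁ A₂ : E μ →L[ℝ] E μ) : HS μ →L[ℝ] HS μ :=
  ((WithLp.prodContinuousLinearEquiv 2 ℝ (E μ) (E μ)).symm.toContinuousLinearMap).comp
    (((A₁.comp (ContinuousLinearMap.snd ℝ (E μ) (E μ))).prod
        (A₂.comp (ContinuousLinearMap.fst ℝ (E μ) (E μ)))).comp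
      (WithLp.prodContinuousLinearEquiv 2 ℝ (E μ) (E μ)).toContinuousLinearMap)

/-- The diagonal representation `π(A)(φ,ψ) = (Aφ, Aψ)`. -/
def diagRep (A : E μ →L[ℝ] E μ) : HS μ →L[ℝ] HS μ := blockDiag A A

/-- The Dirac operator `D(φ,ψ) = (Kψ, Lφ)` associated with the pair `(K, L)`. -/
def dirac (K L : E μ →L[ℝ] E μ) : HS μ →L[ℝ] HS μ := blockAntidiag K L

/-- The commutator `[D, π(A)]`. -/
def commD (K L A : E μ →L[ℝ] E μ) : HS μ →L[ℝ] HS μ :=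
  (dirac K L).comp (diagRep A) - (diagRep A).comp (dirac K L)

/-- The rank-one orthogonal projection onto the span of the unit vector `ψ`:
`φ ↦ ⟪ψ, φ⟫ • ψ`. -/
def rankOneProj (ψ : E μ) : E μ →L[ℝ] E μ := (innerSL ℝ ψ).smulRight ψ

/-- The Haar-basis element `e_w = 2^{ℓ(w)/2} (χ_{[w1]} - χ_{[w0]})`, as a function on `Ω`. -/
def haarFun (w : List Bool) : Ω → ℝ := fun x =>
  (2 : ℝ) ^ ((w.length : ℝ) / 2) *
    ((cylinder (w ++ [true])).indicator 1 x - (cylinder (w ++ [false])).indicator 1 x)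

lemma continuous_shiftMap : Continuous shiftMap :=
  continuous_pi fun n => continuous_apply (n + 1)

lemma continuous_consSeq (a : Bool) : Continuous (consSeq a) := by
  apply continuous_pi
  intro n
  cases n with
  | zero => exact continuous_const
  | succ k => exact continuous_apply k

/-- The Koopman operator on continuous functions: `f ↦ f ∘ σ`. -/
def koopmanC (f : C(Ω, ℝ)) : C(Ω, ℝ) := f.comp ⟨shiftMap, continuous_shiftMap⟩

/-- The Ruelle operator on continuous functions: `(Lf)(x) = (f(0x) + f(1x))/2`. -/
def ruelleC (f : C(Ω, ℝ)) : C(Ω, ℝ) :=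
  ⟨fun x => (f (consSeq false x) + f (consSeq true x)) / 2,
    ((f.continuous.comp (continuous_consSeq false)).add
      (f.continuous.comp (continuous_consSeq true))).div_const 2⟩

end

noncomputable section
namespace Stmt14Aux

lemma measurable_cylinder (w : List Bool) : MeasurableSet (cylinder w) := by
  have h : cylinder w = ⋂ i : Fin w.length, (fun x : Ω => x (i : ℕ)) ⁻¹' {w.get i} :=
    Set.ext fun x => by rw [Set.mem_iInter]; exact Iff.rfl
  rw [h]
  exact MeasurableSet.iInter fun i =>
    (measurable_pi_apply (i : ℕ)) (measurableSet_singleton (w.get i))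

def cylSets : Set (Set Ω) := {s | ∃ w : List Bool, s = cylinder w}

lemma inter_cyl_of_le {w v : List Bool} (h : w.length ≤ v.length)
    {x : Ω} (hx : x ∈ cylinder w ∩ cylinder v) :
    cylinder w ∩ cylinder v = cylinder v := by
  apply Set.inter_eq_self_of_subset_right
  intro y hy i
  have h1 : x (i : ℕ) = w.get i := hx.1 i
  have h2 : x (i : ℕ) = v.get ⟨i, lt_of_lt_of_le i.2 h⟩ := hx.2 ⟨i, lt_of_lt_of_le i.2 h⟩
  have h3 : y (i : ℕ) = v.get ⟨i, lt_of_lt_of_le i.2 h⟩ := hy ⟨i, lt_of_lt_of_le i.2 h⟩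
  rw [h3, ← h2, h1]

lemma isPiSystem_cylSets : IsPiSystem cylSets := by
  rintro s ⟨w, rfl⟩ t ⟨v, rfl⟩ ⟨x, hx⟩
  rcases le_total w.length v.length with h | h
  · exact ⟨v, inter_cyl_of_le h hx⟩
  · rw [Set.inter_comm] at hx ⊢
    exact ⟨w, inter_cyl_of_le h hx⟩

lemma mem_cylinder_cons {a : Bool} {w : List Bool} {x : Ω} :
    x ∈ cylinder (a :: w) ↔ x 0 = a ∧ shiftMap x ∈ cylinder w := by
  constructor
  · intro hx
    refine ⟨hx ⟨0, Nat.succ_pos _⟩, fun i => ?_⟩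
    exact hx ⟨(i : ℕ) + 1, Nat.succ_lt_succ i.2⟩
  · rintro ⟨h0, hs⟩ i
    rcases i with ⟨i, hi⟩
    cases i with
    | zero => exact h0
    | succ k => exact hs ⟨k, Nat.succ_lt_succ_iff.mp hi⟩

lemma mem_cylinder_ofFn_append {i : ℕ} (w : Fin i → Bool) (b : Bool) (x : Ω) :
    x ∈ cylinder (List.ofFn w ++ [b]) ↔ (∀ j : Fin i, x (j : ℕ) = w j) ∧ x i = b := by
  induction i generalizing x with
  | zero =>
    simp only [List.ofFn_zero, List.nil_append]
    constructor
    · intro hx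
      exact ⟨fun j => j.elim0, hx ⟨0, by norm_num⟩⟩
    · rintro ⟨-, h⟩ ⟨j, hj⟩
      have hj0 : j = 0 := by simpa using hj
      subst hj0
      exact h
  | succ n ih =>
    rw [List.ofFn_succ, List.cons_append, mem_cylinder_cons,
      ih (fun j => w j.succ) (shiftMap x)]
    constructor
    · rintro ⟨h0, h1, h2⟩
      refine ⟨fun j => ?_, h2⟩
      rcases j with ⟨j, hj⟩
      cases j with
      | zero => exact h0
      | succ k => exact h1 ⟨k, by omega⟩
    · rintro ⟨h1, h2⟩
      exact ⟨h1 0, fun j => h1 j.succ, h2⟩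

lemma coord_eq_iUnion (i : ℕ) (b : Bool) :
    {x : Ω | x i = b} = ⋃ w : Fin i → Bool, cylinder (List.ofFn w ++ [b]) := by
  ext x
  simp only [Set.mem_setOf_eq, Set.mem_iUnion, mem_cylinder_ofFn_append]
  constructor
  · intro h
    exact ⟨fun j => x j, fun j => rfl, h⟩
  · rintro ⟨w, -, h⟩
    exact h

lemma generateFrom_cylSets :
    (inferInstance : MeasurableSpace Ω) = MeasurableSpace.generateFrom cylSets := by
  apply le_antisymm
  · rw [show (inferInstance : MeasurableSpace Ω) = MeasurableSpace.pi from rfl]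
    apply iSup_le
    intro i
    rw [← measurable_iff_comap_le]
    refine @measurable_to_countable' Bool Ω _ _ (MeasurableSpace.generateFrom cylSets)
      (fun x => x i) ?_
    intro b
    have h : (fun x : Ω => x i) ⁻¹' {b} = {x : Ω | x i = b} := rfl
    rw [h, coord_eq_iUnion]
    exact MeasurableSet.iUnion fun w => MeasurableSpace.measurableSet_generateFrom ⟨_, rfl⟩
  · apply MeasurableSpace.generateFrom_le
    rintro s ⟨w, rfl⟩
    exact measurable_cylinder w

lemma measurable_shiftMap : Measurable shiftMap :=
  measurable_pi_lambda _ fun n => measurable_pi_apply (n + 1)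

lemma preimage_shift_cylinder (w : List Bool) :
    shiftMap ⁻¹' cylinder w = cylinder (false :: w) ∪ cylinder (true :: w) := by
  ext x
  simp only [Set.mem_preimage, Set.mem_union, mem_cylinder_cons]
  rcases Bool.dichotomy (x 0) with h | h <;> simp [h]

lemma cylinder_nil : cylinder ([] : List Bool) = Set.univ := by
  ext x
  simp only [Set.mem_univ, iff_true]
  exact fun i => i.elim0

lemma shift_measurePreserving {μ : Measure Ω} [IsProbabilityMeasure μ]
    (hμ : ∀ w : List Bool, μ (cylinder w) = (1 / 2) ^ w.length) :
    MeasureTheory.MeasurePreserving shiftMap μ μ := by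
  refine ⟨measurable_shiftMap, ?_⟩
  haveI : MeasureTheory.IsProbabilityMeasure (μ.map shiftMap) :=
    MeasureTheory.Measure.isProbabilityMeasure_map measurable_shiftMap.aemeasurable
  apply MeasureTheory.ext_of_generate_finite cylSets generateFrom_cylSets isPiSystem_cylSets
  · rintro s ⟨w, rfl⟩
    rw [MeasureTheory.Measure.map_apply measurable_shiftMap (measurable_cylinder w),
      preimage_shift_cylinder w,
      MeasureTheory.measure_union ?_ (measurable_cylinder (true :: w)), hμ, hμ, hμ]
    · simp only [List.length_cons, one_div]
      rw [pow_succ, ← add_mul, ← two_mul, mul_comm (2 : ℝ≥0∞), mul_assoc,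
        ENNReal.mul_inv_cancel two_ne_zero ENNReal.ofNat_ne_top, mul_one]
    · rw [Set.disjoint_left]
      intro x h1 h2
      have e1 := (mem_cylinder_cons.mp h1).1
      have e2 := (mem_cylinder_cons.mp h2).1
      simp [e1] at e2
  · simp


variable {μ : Measure Ω}

lemma sq_le_sq_imp {a b : ℝ} (hb : 0 ≤ b) (h : a ^ 2 ≤ b ^ 2) : a ≤ b := by nlinarith

lemma commD_eq (K L Mf : E μ →L[ℝ] E μ) :
    commD K L Mf = blockAntidiag (K.comp Mf - Mf.comp K) (L.comp Mf - Mf.comp L) :=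
  ContinuousLinearMap.ext fun _ => rfl

lemma norm_blockAntidiag_le (A₁ A₂ : E μ →L[ℝ] E μ) :
    ‖blockAntidiag A₁ A₂‖ ≤ max ‖A₁‖ ‖A₂‖ := by
  refine ContinuousLinearMap.opNorm_le_bound _ (le_max_of_le_left (norm_nonneg _)) fun p => ?_
  set M := max ‖A₁‖ ‖A₂‖ with hM
  have hM0 : 0 ≤ M := le_max_of_le_left (norm_nonneg _)
  refine sq_le_sq_imp (by positivity) ?_
  have h1 : ‖blockAntidiag A₁ A₂ p‖ ^ 2 = ‖A₁ p.snd‖ ^ 2 + ‖A₂ p.fst‖ ^ 2 := by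
    rw [WithLp.prod_norm_sq_eq_of_L2]; rfl
  have h2 : ‖p‖ ^ 2 = ‖p.fst‖ ^ 2 + ‖p.snd‖ ^ 2 := WithLp.prod_norm_sq_eq_of_L2 p
  have b1 : ‖A₁ p.snd‖ ≤ M * ‖p.snd‖ :=
    le_trans (A₁.le_opNorm _) (by gcongr; exact le_max_left _ _)
  have b2 : ‖A₂ p.fst‖ ≤ M * ‖p.fst‖ :=
    le_trans (A₂.le_opNorm _) (by gcongr; exact le_max_right _ _)
  have := norm_nonneg (A₁ p.snd); have := norm_nonneg (A₂ p.fst)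
  have := norm_nonneg p.fst; have := norm_nonneg p.snd
  rw [h1, mul_pow, h2]
  nlinarith

lemma norm_le_blockAntidiag_left (A₁ A₂ : E μ →L[ℝ] E μ) :
    ‖A₁‖ ≤ ‖blockAntidiag A₁ A₂‖ := by
  refine ContinuousLinearMap.opNorm_le_bound _ (norm_nonneg _) fun ψ => ?_
  set p : HS μ := (WithLp.equiv 2 (E μ × E μ)).symm (0, ψ) with hp
  have h1 : ‖blockAntidiag A₁ A₂ p‖ ^ 2 = ‖A₁ ψ‖ ^ 2 + ‖A₂ (0 : E μ)‖ ^ 2 := by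
    rw [WithLp.prod_norm_sq_eq_of_L2]; rfl
  have h2 : ‖p‖ ^ 2 = ‖ψ‖ ^ 2 := by
    rw [WithLp.prod_norm_sq_eq_of_L2]
    show ‖(0 : E μ)‖ ^ 2 + ‖ψ‖ ^ 2 = _
    simp
  have hle : ‖A₁ ψ‖ ≤ ‖blockAntidiag A₁ A₂ p‖ := by
    refine sq_le_sq_imp (norm_nonneg _) ?_
    rw [h1]; simp
  refine hle.trans ?_
  calc ‖blockAntidiag A₁ A₂ p‖ ≤ ‖blockAntidiag A₁ A₂‖ * ‖p‖ := ContinuousLinearMap.le_opNorm _ _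
    _ = ‖blockAntidiag A₁ A₂‖ * ‖ψ‖ := by
        congr 1
        refine sq_le_sq_imp (norm_nonneg _) (le_of_eq h2) |>.antisymm ?_
        exact sq_le_sq_imp (norm_nonneg _) (le_of_eq h2.symm)

lemma norm_le_blockAntidiag_right (A₁ A₂ : E μ →L[ℝ] E μ) :
    ‖A₂‖ ≤ ‖blockAntidiag A₁ A₂‖ := by
  refine ContinuousLinearMap.opNorm_le_bound _ (norm_nonneg _) fun φ => ?_
  set p : HS μ := (WithLp.equiv 2 (E μ × E μ)).symm (φ, 0) with hp
  have h1 : ‖blockAntidiag A₁ A₂ p‖ ^ 2 = ‖A₁ (0 : E μ)‖ ^ 2 + ‖A₂ φ‖ ^ 2 := by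
    rw [WithLp.prod_norm_sq_eq_of_L2]; rfl
  have h2 : ‖p‖ ^ 2 = ‖φ‖ ^ 2 := by
    rw [WithLp.prod_norm_sq_eq_of_L2]
    show ‖φ‖ ^ 2 + ‖(0 : E μ)‖ ^ 2 = _
    simp
  have hle : ‖A₂ φ‖ ≤ ‖blockAntidiag A₁ A₂ p‖ := by
    refine sq_le_sq_imp (norm_nonneg _) ?_
    rw [h1]; simp
  refine hle.trans ?_
  calc ‖blockAntidiag A₁ A₂ p‖ ≤ ‖blockAntidiag A₁ A₂‖ * ‖p‖ := ContinuousLinearMap.le_opNorm _ _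
    _ = ‖blockAntidiag A₁ A₂‖ * ‖φ‖ := by
        congr 1
        refine sq_le_sq_imp (norm_nonneg _) (le_of_eq h2) |>.antisymm ?_
        exact sq_le_sq_imp (norm_nonneg _) (le_of_eq h2.symm)

lemma norm_blockAntidiag_of_eq (A₁ A₂ : E μ →L[ℝ] E μ) (h : ‖A₂‖ = ‖A₁‖) :
    ‖blockAntidiag A₁ A₂‖ = ‖A₁‖ :=
  le_antisymm (le_trans (norm_blockAntidiag_le A₁ A₂) (by rw [h, max_self]))
    (norm_le_blockAntidiag_left A₁ A₂)


variable {μ : Measure Ω}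

lemma inner_L2 (u v : E μ) : ⟪u, v⟫_ℝ = ∫ a, (u : Ω → ℝ) a * (v : Ω → ℝ) a ∂μ :=
  by rw [MeasureTheory.L2.inner_def]; congr 1; funext a; simp [mul_comm]

lemma Mf_adjoint (f : C(Ω, ℝ)) (Mf : E μ →L[ℝ] E μ)
    (hMf : ∀ g : E μ, (Mf g : Ω → ℝ) =ᵐ[μ] fun x => f x * g x) :
    ContinuousLinearMap.adjoint Mf = Mf := by
  symm
  rw [ContinuousLinearMap.eq_adjoint_iff]
  intro g h
  rw [inner_L2, inner_L2]
  have e1 : (fun a => (Mf g : Ω → ℝ) a * (h : Ω → ℝ) a)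
      =ᵐ[μ] fun a => (g : Ω → ℝ) a * (f a * (h : Ω → ℝ) a) := by
    filter_upwards [hMf g] with a ha
    rw [ha]; ring
  have e2 : (fun a => (g : Ω → ℝ) a * (Mf h : Ω → ℝ) a)
      =ᵐ[μ] fun a => (g : Ω → ℝ) a * (f a * (h : Ω → ℝ) a) := by
    filter_upwards [hMf h] with a ha
    rw [ha]
  rw [MeasureTheory.integral_congr_ae e1, MeasureTheory.integral_congr_ae e2]

lemma norm_C2_eq_C1 (K L Mf : E μ →L[ℝ] E μ)
    (hadj : ContinuousLinearMap.adjoint K = L)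
    (hMfadj : ContinuousLinearMap.adjoint Mf = Mf) :
    ‖L.comp Mf - Mf.comp L‖ = ‖K.comp Mf - Mf.comp K‖ := by
  have hLadj : ContinuousLinearMap.adjoint L = K := by
    rw [← hadj, ContinuousLinearMap.adjoint_adjoint]
  have h : ContinuousLinearMap.adjoint (K.comp Mf - Mf.comp K)
      = -(L.comp Mf - Mf.comp L) := by
    rw [map_sub, ContinuousLinearMap.adjoint_comp, ContinuousLinearMap.adjoint_comp,
      hadj, hMfadj]
    abel
  calc ‖L.comp Mf - Mf.comp L‖ = ‖-(L.comp Mf - Mf.comp L)‖ := (norm_neg _).symm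
    _ = ‖ContinuousLinearMap.adjoint (K.comp Mf - Mf.comp K)‖ := by rw [h]
    _ = ‖K.comp Mf - Mf.comp K‖ := ContinuousLinearMap.adjoint.norm_map _


variable {μ : Measure Ω}

lemma C1_rep [IsProbabilityMeasure μ]
    (hμ : ∀ w : List Bool, μ (cylinder w) = (1 / 2) ^ w.length)
    (K : E μ →L[ℝ] E μ)
    (hK : ∀ g : E μ, (K g : Ω → ℝ) =ᵐ[μ] fun x => g (shiftMap x))
    (f : C(Ω, ℝ)) (Mf : E μ →L[ℝ] E μ)
    (hMf : ∀ g : E μ, (Mf g : Ω → ℝ) =ᵐ[μ] fun x => f x * g x)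
    (ψ : E μ) :
    ((K.comp Mf - Mf.comp K) ψ : Ω → ℝ) =ᵐ[μ]
      fun x => (f (shiftMap x) - f x) * (ψ : Ω → ℝ) (shiftMap x) := by
  have hqmp := (shift_measurePreserving hμ).quasiMeasurePreserving
  have h1 : ((K (Mf ψ) : Ω → ℝ)) =ᵐ[μ] fun x => f (shiftMap x) * (ψ : Ω → ℝ) (shiftMap x) := by
    refine (hK (Mf ψ)).trans ?_
    have := hqmp.ae_eq_comp (hMf ψ)
    exact this
  have h2 : ((Mf (K ψ) : Ω → ℝ)) =ᵐ[μ] fun x => f x * (ψ : Ω → ℝ) (shiftMap x) := by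
    refine (hMf (K ψ)).trans ?_
    filter_upwards [hK ψ] with a ha
    rw [ha]
  have h0 : ((K.comp Mf - Mf.comp K) ψ : Ω → ℝ) =ᵐ[μ]
      fun x => (K (Mf ψ) : Ω → ℝ) x - (Mf (K ψ) : Ω → ℝ) x := by
    have : (K.comp Mf - Mf.comp K) ψ = K (Mf ψ) - Mf (K ψ) := rfl
    rw [this]
    exact MeasureTheory.Lp.coeFn_sub _ _
  filter_upwards [h0, h1, h2] with a ha0 ha1 ha2
  rw [ha0, ha1, ha2]
  ring

set_option maxHeartbeats 1000000 in
lemma C1_norm_le [IsProbabilityMeasure μ]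
    (hμ : ∀ w : List Bool, μ (cylinder w) = (1 / 2) ^ w.length)
    (K : E μ →L[ℝ] E μ)
    (hK : ∀ g : E μ, (K g : Ω → ℝ) =ᵐ[μ] fun x => g (shiftMap x))
    (f : C(Ω, ℝ)) (Mf : E μ →L[ℝ] E μ)
    (hMf : ∀ g : E μ, (Mf g : Ω → ℝ) =ᵐ[μ] fun x => f x * g x) :
    ‖K.comp Mf - Mf.comp K‖ ≤ ‖koopmanC f - f‖ := by
  set G : C(Ω, ℝ) := koopmanC f - f with hG
  refine ContinuousLinearMap.opNorm_le_bound _ (norm_nonneg G) fun ψ => ?_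
  have hmp := shift_measurePreserving hμ
  rw [MeasureTheory.Lp.norm_def, MeasureTheory.Lp.norm_def]
  have e1 : MeasureTheory.eLpNorm ((K.comp Mf - Mf.comp K) ψ : Ω → ℝ) 2 μ
      = MeasureTheory.eLpNorm (fun x => (f (shiftMap x) - f x) * (ψ : Ω → ℝ) (shiftMap x)) 2 μ :=
    MeasureTheory.eLpNorm_congr_ae (C1_rep hμ K hK f Mf hMf ψ)
  have e2 : MeasureTheory.eLpNorm (fun x => (f (shiftMap x) - f x) * (ψ : Ω → ℝ) (shiftMap x)) 2 μ
      ≤ MeasureTheory.eLpNorm (fun x => ‖G‖ • ((ψ : Ω → ℝ) (shiftMap x))) 2 μ := by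
    refine MeasureTheory.eLpNorm_mono_ae (Filter.Eventually.of_forall fun x => ?_)
    have hb : |f (shiftMap x) - f x| ≤ ‖G‖ := by
      have : (f (shiftMap x) - f x) = G x := by
        simp [hG, koopmanC, ContinuousMap.sub_apply]
      rw [this]
      exact ContinuousMap.norm_coe_le_norm G x
    simp only [smul_eq_mul, norm_mul, Real.norm_eq_abs, abs_of_nonneg (norm_nonneg G)]
    gcongr
  have e3 : MeasureTheory.eLpNorm (fun x => ‖G‖ • ((ψ : Ω → ℝ) (shiftMap x))) 2 μ
      = (‖(‖G‖)‖₊ : ℝ≥0∞) * MeasureTheory.eLpNorm (fun x => (ψ : Ω → ℝ) (shiftMap x)) 2 μ :=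
    MeasureTheory.eLpNorm_const_smul (‖G‖) (fun x => (ψ : Ω → ℝ) (shiftMap x)) 2 μ
  have e4 : MeasureTheory.eLpNorm (fun x => (ψ : Ω → ℝ) (shiftMap x)) 2 μ
      = MeasureTheory.eLpNorm (ψ : Ω → ℝ) 2 μ :=
    MeasureTheory.eLpNorm_comp_measurePreserving (MeasureTheory.Lp.aestronglyMeasurable ψ) hmp
  rw [e1]
  refine le_trans (ENNReal.toReal_mono ?_ (e2.trans (le_of_eq (e3.trans (by rw [e4]))))) ?_
  · exact ENNReal.mul_ne_top ENNReal.coe_ne_top (MeasureTheory.Lp.eLpNorm_ne_top ψ)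
  · rw [ENNReal.toReal_mul]
    simp [Real.norm_eq_abs, abs_of_nonneg (norm_nonneg G)]


variable {μ : Measure Ω}

lemma consSeq_shift (x : Ω) : consSeq (x 0) (shiftMap x) = x := by
  funext n
  cases n with
  | zero => rfl
  | succ k => rfl

lemma exists_prefix_control {q : Ω → ℝ} (hq : Continuous q) (z : Ω) {ε : ℝ} (hε : 0 < ε) :
    ∃ n : ℕ, ∀ y : Ω, (∀ i, i < n → y i = z i) → |q y - q z| < ε := by
  have hV : IsOpen (q ⁻¹' Metric.ball (q z) ε) := hq.isOpen_preimage _ Metric.isOpen_ball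
  have hzV : z ∈ q ⁻¹' Metric.ball (q z) ε := by simp [hε]
  obtain ⟨I, u, h1, h2⟩ := isOpen_pi_iff.mp hV z hzV
  refine ⟨I.sup id + 1, fun y hy => ?_⟩
  have hmem : y ∈ (I : Set ℕ).pi u := by
    intro i hi
    have he : y i = z i := hy i (Nat.lt_succ_of_le (Finset.le_sup (f := id) hi))
    rw [he]
    exact (h1 i hi).2
  have := h2 hmem
  simpa [Real.dist_eq] using this

lemma mem_cylinder_ofFn {n : ℕ} (u : Fin n → Bool) (x : Ω) :
    x ∈ cylinder (List.ofFn u) ↔ ∀ j : Fin n, x (j : ℕ) = u j := by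
  induction n generalizing x with
  | zero =>
    simp only [List.ofFn_zero]
    constructor
    · intro _ j; exact j.elim0
    · intro _ j
      rw [List.length_nil] at j
      exact j.elim0
  | succ m ih =>
    rw [List.ofFn_succ, mem_cylinder_cons, ih (fun j => u j.succ) (shiftMap x)]
    constructor
    · rintro ⟨h0, h1⟩ j
      rcases j with ⟨j, hj⟩
      cases j with
      | zero => exact h0
      | succ k => exact h1 ⟨k, by omega⟩
    · intro h
      exact ⟨h 0, fun j => h j.succ⟩

set_option maxHeartbeats 1000000 in
lemma C1_norm_ge [IsProbabilityMeasure μ]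
    (hμ : ∀ w : List Bool, μ (cylinder w) = (1 / 2) ^ w.length)
    (K : E μ →L[ℝ] E μ)
    (hK : ∀ g : E μ, (K g : Ω → ℝ) =ᵐ[μ] fun x => g (shiftMap x))
    (f : C(Ω, ℝ)) (Mf : E μ →L[ℝ] E μ)
    (hMf : ∀ g : E μ, (Mf g : Ω → ℝ) =ᵐ[μ] fun x => f x * g x) :
    ‖f - ruelleC f‖ ≤ ‖K.comp Mf - Mf.comp K‖ := by
  set C₁ : E μ →L[ℝ] E μ := K.comp Mf - Mf.comp K with hC₁
  set h : C(Ω, ℝ) := f - ruelleC f with hh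
  refine le_of_forall_pos_le_add fun ε hε => ?_
  rcases le_or_gt ‖h‖ ε with hcase | hcase
  · exact hcase.trans (by linarith [norm_nonneg C₁])
  -- attainment of the sup norm
  obtain ⟨z, -, hz⟩ := IsCompact.exists_isMaxOn (isCompact_univ (X := Ω)) Set.univ_nonempty
    (continuous_abs.comp h.continuous).continuousOn
  have hzn : ‖h‖ ≤ |h z| := (ContinuousMap.norm_le _ (abs_nonneg _)).mpr
    fun x => by simpa [Real.norm_eq_abs] using hz (Set.mem_univ x)
  -- the two one-sided differences
  set G0 : ℝ := f z - f (consSeq false z) with hG0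
  set G1 : ℝ := f z - f (consSeq true z) with hG1
  have hhz : h z = (G0 + G1) / 2 := by
    simp only [hh, ContinuousMap.sub_apply, hG0, hG1, ruelleC, ContinuousMap.coe_mk]
    ring
  -- continuity control
  obtain ⟨n0, hn0⟩ := exists_prefix_control
    (f.continuous.sub (f.continuous.comp (continuous_consSeq false))) z hε
  obtain ⟨n1, hn1⟩ := exists_prefix_control
    (f.continuous.sub (f.continuous.comp (continuous_consSeq true))) z hε
  set n : ℕ := max n0 n1 with hn
  set v : List Bool := List.ofFn (fun i : Fin n => z i) with hv
  have hvlen : v.length = n := by simp [hv]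
  -- the indicator test function
  have hvmeas : MeasurableSet (cylinder v) := measurable_cylinder v
  have hvfin : μ (cylinder v) ≠ ∞ := by
    rw [hμ]; exact ENNReal.pow_ne_top (by norm_num)
  set ψ : E μ := MeasureTheory.indicatorConstLp 2 hvmeas hvfin (1 : ℝ) with hψ
  set m : ℝ := (μ (cylinder v)).toReal with hm
  have hm' : m = (1 / 2 : ℝ) ^ n := by
    rw [hm, hμ, hvlen]
    simp [ENNReal.toReal_pow]
  have hmpos : 0 < m := by rw [hm']; positivity
  have hψn : ‖ψ‖ ^ 2 = m := by
    rw [hψ, MeasureTheory.norm_indicatorConstLp two_ne_zero ENNReal.ofNat_ne_top]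
    rw [norm_one, one_mul, MeasureTheory.measureReal_def, ← hm]
    rw [← Real.rpow_natCast (m ^ (1 / (2 : ℝ≥0∞).toReal)) 2, ← Real.rpow_mul ENNReal.toReal_nonneg]
    norm_num
    exact hm.symm
  -- the function W representing C₁ ψ
  set g : Ω → ℝ := fun x => f (shiftMap x) - f x with hg
  set W : Ω → ℝ := fun x => g x * (cylinder v).indicator (fun _ => (1 : ℝ)) (shiftMap x) with hW
  have hrep : ((C₁ ψ : Ω → ℝ)) =ᵐ[μ] W := by
    refine (C1_rep hμ K hK f Mf hMf ψ).trans ?_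
    have hcomp := (shift_measurePreserving hμ).quasiMeasurePreserving.ae_eq_comp
      (MeasureTheory.indicatorConstLp_coeFn (p := 2) (hs := hvmeas) (hμs := hvfin) (c := (1:ℝ)))
    filter_upwards [hcomp] with a ha
    simp only [Function.comp_apply] at ha
    rw [hW]
    simp only [hg]
    rw [ha]
  -- the constants
  set c0 : ℝ := max (|G0| - ε) 0 with hc0
  set c1 : ℝ := max (|G1| - ε) 0 with hc1
  set B : Ω → ℝ := fun x =>
    (cylinder (false :: v)).indicator (fun _ => c0 ^ 2) x
      + (cylinder (true :: v)).indicator (fun _ => c1 ^ 2) x with hB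
  -- pointwise bound B ≤ W * W
  have hpoint : ∀ x, B x ≤ W x * W x := by
    intro x
    have key : ∀ a : Bool, x ∈ cylinder (a :: v) →
        (max (|f z - f (consSeq a z)| - ε) 0) ^ 2 ≤ W x * W x := by
      intro a hx
      obtain ⟨hx0, hxs⟩ := mem_cylinder_cons.mp hx
      have hWx : W x = g x := by
        rw [hW]
        simp only [Set.indicator_of_mem hxs, mul_one]
      have hgx : g x = (fun y => f y - f (consSeq a y)) (shiftMap x) := by
        simp only [hg]
        congr 1
        conv_lhs => rw [← consSeq_shift x, hx0]
      have hctrl : |g x - (f z - f (consSeq a z))| < ε := by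
        rw [hgx]
        have hpre : ∀ i, i < n → shiftMap x i = z i := by
          intro i hi
          have := hxs
          rw [hv, mem_cylinder_ofFn] at this
          exact this ⟨i, by omega⟩
        cases a with
        | false => exact hn0 (shiftMap x) fun i hi => hpre i (lt_of_lt_of_le hi (by omega))
        | true => exact hn1 (shiftMap x) fun i hi => hpre i (lt_of_lt_of_le hi (by omega))
      have habs : max (|f z - f (consSeq a z)| - ε) 0 ≤ |g x| := by
        have htri : |f z - f (consSeq a z)| - |g x| ≤ |(f z - f (consSeq a z)) - g x| :=
          abs_sub_abs_le_abs_sub _ _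
        have h2 : |(f z - f (consSeq a z)) - g x| < ε := by
          rw [abs_sub_comm]; exact hctrl
        exact max_le (by linarith) (abs_nonneg _)
      rw [hWx]
      calc (max (|f z - f (consSeq a z)| - ε) 0) ^ 2 ≤ |g x| ^ 2 := by
            have h0 : (0:ℝ) ≤ max (|f z - f (consSeq a z)| - ε) 0 := le_max_right _ _
            nlinarith [habs]
        _ = g x * g x := by rw [sq_abs]; ring
    rcases Classical.em (x ∈ cylinder (false :: v)) with hxf | hxf
    · have hxt : x ∉ cylinder (true :: v) := by
        intro hxt
        have e1 := (mem_cylinder_cons.mp hxf).1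
        have e2 := (mem_cylinder_cons.mp hxt).1
        rw [e1] at e2; exact Bool.noConfusion e2
      rw [hB]
      simp only [Set.indicator_of_mem hxf, Set.indicator_of_notMem hxt, add_zero]
      exact key false hxf
    · rcases Classical.em (x ∈ cylinder (true :: v)) with hxt | hxt
      · rw [hB]
        simp only [Set.indicator_of_mem hxt, Set.indicator_of_notMem hxf, zero_add]
        exact key true hxt
      · rw [hB]
        simp only [Set.indicator_of_notMem hxf, Set.indicator_of_notMem hxt, add_zero]
        exact mul_self_nonneg (W x)
  -- integrability
  have hint_uu : MeasureTheory.Integrable (fun a => (C₁ ψ : Ω → ℝ) a * (C₁ ψ : Ω → ℝ) a) μ :=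
    MeasureTheory.L2.integrable_inner (𝕜 := ℝ) (C₁ ψ) (C₁ ψ)
  have hint_WW : MeasureTheory.Integrable (fun a => W a * W a) μ :=
    hint_uu.congr (by filter_upwards [hrep] with a ha; rw [ha])
  have hint_B : MeasureTheory.Integrable B μ :=
    ((MeasureTheory.integrable_const _).indicator (measurable_cylinder (false :: v))).add
      ((MeasureTheory.integrable_const _).indicator (measurable_cylinder (true :: v)))
  have hμc : ∀ a : Bool, (μ (cylinder (a :: v))).toReal = m / 2 := by
    intro a
    rw [hμ]
    have e : ((1 / 2 : ℝ≥0∞) ^ (a :: v).length).toReal = (1 / 2 : ℝ) ^ (n + 1) := by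
      simp [List.length_cons, hvlen, ENNReal.toReal_pow]
    rw [e, hm']
    ring
  have hintB_val : ∫ x, B x ∂μ = m / 2 * (c0 ^ 2 + c1 ^ 2) := by
    rw [hB]
    rw [MeasureTheory.integral_add
      ((MeasureTheory.integrable_const _).indicator (measurable_cylinder (false :: v)))
      ((MeasureTheory.integrable_const _).indicator (measurable_cylinder (true :: v)))]
    rw [MeasureTheory.integral_indicator_const _ (measurable_cylinder (false :: v)),
      MeasureTheory.integral_indicator_const _ (measurable_cylinder (true :: v)),
      MeasureTheory.measureReal_def, MeasureTheory.measureReal_def, hμc false, hμc true]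
    simp only [smul_eq_mul]
    ring
  have hnormsq : ‖C₁ ψ‖ ^ 2 = ∫ a, W a * W a ∂μ := by
    rw [← real_inner_self_eq_norm_sq, inner_L2]
    exact MeasureTheory.integral_congr_ae (by filter_upwards [hrep] with a ha; rw [ha])
  have hlow : m / 2 * (c0 ^ 2 + c1 ^ 2) ≤ ‖C₁ ψ‖ ^ 2 := by
    rw [hnormsq, ← hintB_val]
    exact MeasureTheory.integral_mono hint_B hint_WW hpoint
  have hsum : 2 * (‖h‖ - ε) ≤ c0 + c1 := by
    have habs2 : |G0 + G1| ≤ |G0| + |G1| := abs_add_le _ _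
    have hGh : G0 + G1 = 2 * h z := by rw [hhz]; ring
    have h2hz : 2 * ‖h‖ ≤ |G0 + G1| := by
      rw [hGh, abs_mul]
      have : |(2:ℝ)| = 2 := by norm_num
      rw [this]
      linarith [hzn]
    have hcc0 : |G0| - ε ≤ c0 := le_max_left _ _
    have hcc1 : |G1| - ε ≤ c1 := le_max_left _ _
    linarith
  have hc0nn : (0:ℝ) ≤ c0 := le_max_right _ _
  have hc1nn : (0:ℝ) ≤ c1 := le_max_right _ _
  have hscal : (‖h‖ - ε) ^ 2 ≤ (c0 ^ 2 + c1 ^ 2) / 2 := by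
    have hp1 : (0:ℝ) ≤ c0 + c1 - 2 * (‖h‖ - ε) := by linarith
    have hp2 : (0:ℝ) ≤ c0 + c1 + 2 * (‖h‖ - ε) := by linarith
    nlinarith [sq_nonneg (c0 - c1), mul_nonneg hp1 hp2]
  have hkey : (‖h‖ - ε) ^ 2 * m ≤ ‖C₁ ψ‖ ^ 2 := by
    refine le_trans ?_ hlow
    calc (‖h‖ - ε) ^ 2 * m ≤ (c0 ^ 2 + c1 ^ 2) / 2 * m :=
        mul_le_mul_of_nonneg_right hscal hmpos.le
      _ = m / 2 * (c0 ^ 2 + c1 ^ 2) := by ring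
  have hψpos : 0 < ‖ψ‖ := by
    rcases (norm_nonneg ψ).lt_or_eq with hp | hp
    · exact hp
    · exfalso
      rw [← hp] at hψn
      simp at hψn
      rw [← hψn] at hmpos
      exact lt_irrefl _ hmpos
  have h1 : (‖h‖ - ε) * ‖ψ‖ ≤ ‖C₁ ψ‖ := by
    refine sq_le_sq_imp (norm_nonneg _) ?_
    rw [mul_pow, hψn]
    exact hkey
  have h2 : ‖C₁ ψ‖ ≤ ‖C₁‖ * ‖ψ‖ := C₁.le_opNorm ψ
  have h3 : (‖h‖ - ε) * ‖ψ‖ ≤ ‖C₁‖ * ‖ψ‖ := h1.trans h2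
  have h4 : ‖h‖ - ε ≤ ‖C₁‖ := le_of_mul_le_mul_right h3 hψpos
  linarith


end Stmt14Aux
end

noncomputable section
namespace Stmt14Aux
variable {μ : Measure Ω}

lemma shiftMap_consSeq (a : Bool) (y : Ω) : shiftMap (consSeq a y) = y := funext fun _ => rfl

lemma norms_eq_of_indep (f : C(Ω, ℝ))
    (hf : ∀ x : Ω, f (consSeq false x) = f (consSeq true x)) :
    ‖koopmanC f - f‖ = ‖f - ruelleC f‖ := by
  have hfx : ∀ x : Ω, f x = f (consSeq false (shiftMap x)) := by
    intro x
    conv_lhs => rw [← consSeq_shift x]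
    cases hx0 : x 0 with
    | false => rfl
    | true => exact (hf (shiftMap x)).symm
  have hpt : ∀ x : Ω, (koopmanC f - f) x = (f - ruelleC f) (shiftMap x) := by
    intro x
    simp only [ContinuousMap.sub_apply, koopmanC, ContinuousMap.comp_apply,
      ContinuousMap.coe_mk, ruelleC]
    rw [hf (shiftMap x)] at *
    rw [hfx x, hf (shiftMap x)]
    ring
  have hpt2 : ∀ y : Ω, (f - ruelleC f) y = (koopmanC f - f) (consSeq false y) := by
    intro y
    rw [hpt (consSeq false y), shiftMap_consSeq]
  apply le_antisymm
  · refine (ContinuousMap.norm_le _ (norm_nonneg _)).mpr fun x => ?_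
    rw [hpt x]
    exact ContinuousMap.norm_coe_le_norm _ _
  · refine (ContinuousMap.norm_le _ (norm_nonneg _)).mpr fun y => ?_
    rw [hpt2 y]
    exact ContinuousMap.norm_coe_le_norm _ _

end Stmt14Aux
end

/-- `|f∘σ − f|_∞ = |Kf − f|_∞ ≥ ‖[D, π(M_f)]‖ ≥ |f − Lf|_∞`, with equalities when
`f` does not depend on the first coordinate. -/
theorem stmt14
    (μ : Measure Ω) [IsProbabilityMeasure μ]
    (hμ : ∀ w : List Bool, μ (cylinder w) = (1 / 2) ^ w.length)
    (K L : E μ →L[ℝ] E μ)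
    (hK : ∀ g : E μ, (K g : Ω → ℝ) =ᵐ[μ] fun x => g (shiftMap x))
    (hL : ∀ g : E μ, (L g : Ω → ℝ) =ᵐ[μ]
      fun x => (g (consSeq false x) + g (consSeq true x)) / 2)
    (hadj : ContinuousLinearMap.adjoint K = L)
    (f : C(Ω, ℝ)) (Mf : E μ →L[ℝ] E μ)
    (hMf : ∀ g : E μ, (Mf g : Ω → ℝ) =ᵐ[μ] fun x => f x * g x) :
    ‖f.comp ⟨shiftMap, continuous_shiftMap⟩ - f‖ = ‖koopmanC f - f‖ ∧
    ‖koopmanC f - f‖ ≥ ‖commD K L Mf‖ ∧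
    ‖commD K L Mf‖ ≥ ‖f - ruelleC f‖ ∧
    ((∀ x : Ω, f (consSeq false x) = f (consSeq true x)) →
      ‖koopmanC f - f‖ = ‖commD K L Mf‖ ∧ ‖commD K L Mf‖ = ‖f - ruelleC f‖) := by
  have hMfadj := Stmt14Aux.Mf_adjoint f Mf hMf
  have hC2 : ‖L.comp Mf - Mf.comp L‖ = ‖K.comp Mf - Mf.comp K‖ :=
    Stmt14Aux.norm_C2_eq_C1 K L Mf hadj hMfadj
  have hcommD : ‖commD K L Mf‖ = ‖K.comp Mf - Mf.comp K‖ := by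
    rw [Stmt14Aux.commD_eq]
    exact Stmt14Aux.norm_blockAntidiag_of_eq _ _ hC2
  have hub := Stmt14Aux.C1_norm_le hμ K hK f Mf hMf
  have hlb := Stmt14Aux.C1_norm_ge hμ K hK f Mf hMf
  refine ⟨rfl, by rw [hcommD]; exact hub, by rw [hcommD]; exact hlb, fun hf => ?_⟩
  have heq := Stmt14Aux.norms_eq_of_indep f hf
  constructor
  · refine le_antisymm ?_ (by rw [hcommD]; exact hub)
    rw [heq, hcommD]
    exact hlb
  · refine le_antisymm ?_ (by rw [hcommD]; exact hlb)
    rw [hcommD, ← heq]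
    exact hub
end

section
/- For every continuous function f : Ω → ℝ: ‖[D, π(M_f)]‖ = |√(L(|Kf − f|²))|_∞ = sup over x ∈ Ω of √( |f(x) − f(0x)|²/2 + |f(x) − f(1x)|²/2 ). -/
open MeasureTheory ContinuousLinearMap
open scoped RealInnerProductSpace InnerProductSpace ENNReal

noncomputable section Aux

lemma measurable_shiftMap : Measurable shiftMap :=
  measurable_pi_iff.mpr fun n => measurable_pi_apply (n + 1)

lemma measurable_consSeq (a : Bool) : Measurable (consSeq a) := by
  refine measurable_pi_iff.mpr fun n => ?_
  cases n with
  | zero => exact measurable_const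
  | succ k => exact measurable_pi_apply k

lemma shift_cons (a : Bool) (x : Ω) : shiftMap (consSeq a x) = x := rfl

lemma mem_cyl (w : List Bool) (x : Ω) :
    x ∈ cylinder w ↔ ∀ i, ∀ h : i < w.length, x i = w[i] := by
  constructor
  · intro hx i h; exact hx ⟨i, h⟩
  · intro hx i; exact hx i i.isLt

lemma cylinder_nil : cylinder [] = Set.univ := by
  ext x
  simp only [Set.mem_univ, iff_true, mem_cyl]
  intro i hi
  simp at hi

lemma mem_cyl_cons (b : Bool) (w : List Bool) (x : Ω) :
    x ∈ cylinder (b :: w) ↔ x 0 = b ∧ shiftMap x ∈ cylinder w := by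
  simp only [mem_cyl]
  constructor
  · intro h
    refine ⟨h 0 (Nat.succ_pos _), fun i hi => ?_⟩
    simpa [shiftMap] using h (i + 1) (Nat.succ_lt_succ hi)
  · rintro ⟨h0, hs⟩ i hi
    cases i with
    | zero => simpa using h0
    | succ k =>
      simpa [shiftMap] using hs k (Nat.lt_of_succ_lt_succ hi)

lemma measurableSet_cylinder (w : List Bool) : MeasurableSet (cylinder w) := by
  have : cylinder w = ⋂ i : Fin w.length, (fun x : Ω => x (i : ℕ)) ⁻¹' {w.get i} := by
    ext x
    simp only [Set.mem_iInter, Set.mem_preimage, Set.mem_singleton_iff]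
    exact Iff.rfl
  rw [this]
  exact MeasurableSet.iInter fun i =>
    (measurable_pi_apply (i : ℕ)) (MeasurableSet.singleton (w.get i))

lemma coord_eq_iUnion (n : ℕ) (b : Bool) :
    {x : Ω | x n = b} = ⋃ (w : List Bool) (_ : w.length = n), cylinder (w ++ [b]) := by
  ext x
  simp only [Set.mem_setOf_eq, Set.mem_iUnion]
  constructor
  · intro hx
    refine ⟨List.ofFn (fun i : Fin n => x i), by simp, ?_⟩
    rw [mem_cyl]
    intro i hi
    rcases Nat.lt_or_ge i (List.ofFn (fun i : Fin n => x i)).length with h | h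
    · rw [List.getElem_append_left h]
      simp only [List.length_ofFn] at h
      simp [List.getElem_ofFn]
    · have hlen : (List.ofFn (fun i : Fin n => x i)).length = n := by simp
      simp only [List.length_append, List.length_ofFn, List.length_singleton] at hi
      have hin : i = n := by omega
      subst hin
      rw [List.getElem_concat_length (by simp)]
      exact hx
  · rintro ⟨w, hw, hx⟩
    rw [mem_cyl] at hx
    have := hx w.length (by simp)
    rw [List.getElem_concat_length rfl] at this
    rwa [hw] at this

lemma generateFrom_cylinders :
    (inferInstance : MeasurableSpace Ω) = .generateFrom (Set.range cylinder) := by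
  refine le_antisymm ?_ (MeasurableSpace.generateFrom_le ?_)
  · have key : ∀ (n : ℕ) (b : Bool),
        MeasurableSet[MeasurableSpace.generateFrom (Set.range cylinder)] {x : Ω | x n = b} := by
      intro n b
      rw [coord_eq_iUnion]
      refine MeasurableSet.iUnion fun w => MeasurableSet.iUnion fun _ => ?_
      exact MeasurableSpace.measurableSet_generateFrom ⟨w ++ [b], rfl⟩
    rw [show (inferInstance : MeasurableSpace Ω) = MeasurableSpace.pi from rfl,
      MeasurableSpace.pi_eq_generateFrom_projections]
    refine MeasurableSpace.generateFrom_le ?_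
    rintro _ ⟨i, A, -, rfl⟩
    have hA : Function.eval i ⁻¹' A = ⋃ (b : Bool) (_ : b ∈ A), {x : Ω | x i = b} := by
      ext x; simp [Function.eval]
    rw [hA]
    exact .iUnion fun b => .iUnion fun _ => key i b
  · rintro s ⟨w, rfl⟩
    exact measurableSet_cylinder w

lemma isPiSystem_cylinders : IsPiSystem (Set.range cylinder) := by
  rintro _ ⟨w, rfl⟩ _ ⟨v, rfl⟩ ⟨x, hxw, hxv⟩
  rw [mem_cyl] at hxw
  rw [mem_cyl] at hxv
  wlog hle : w.length ≤ v.length generalizing w v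
  · rw [Set.inter_comm]; exact this v w hxv hxw (le_of_not_ge hle)
  have hsub : cylinder v ⊆ cylinder w := by
    intro y hy
    rw [mem_cyl] at hy ⊢
    intro i hi
    rw [hy i (lt_of_lt_of_le hi hle)]
    rw [← hxw i hi, hxv i (lt_of_lt_of_le hi hle)]
  rw [Set.inter_eq_right.mpr hsub]
  exact ⟨v, rfl⟩

variable {μ : Measure Ω}

lemma preimage_shift_cyl (w : List Bool) :
    shiftMap ⁻¹' cylinder w = cylinder (false :: w) ∪ cylinder (true :: w) := by
  ext x
  simp only [Set.mem_preimage, Set.mem_union, mem_cyl_cons]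
  cases hx : x 0 <;> simp [hx]

lemma disjoint_cyl_cons (w : List Bool) :
    Disjoint (cylinder (false :: w)) (cylinder (true :: w)) := by
  rw [Set.disjoint_left]
  intro x hx hx'
  rw [mem_cyl_cons] at hx hx'
  rw [hx.1] at hx'
  exact Bool.false_ne_true hx'.1

lemma map_shift [IsProbabilityMeasure μ]
    (hμ : ∀ w : List Bool, μ (cylinder w) = (1 / 2) ^ w.length) :
    Measure.map shiftMap μ = μ := by
  haveI : IsProbabilityMeasure (Measure.map shiftMap μ) :=
    Measure.isProbabilityMeasure_map measurable_shiftMap.aemeasurable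
  refine ext_of_generate_finite _ generateFrom_cylinders isPiSystem_cylinders ?_ ?_
  · rintro _ ⟨w, rfl⟩
    rw [Measure.map_apply measurable_shiftMap (measurableSet_cylinder w),
      preimage_shift_cyl, measure_union (disjoint_cyl_cons w) (measurableSet_cylinder _),
      hμ, hμ, hμ]
    simp only [List.length_cons, pow_succ]
    rw [← mul_add, ENNReal.add_halves, mul_one]
  · simp

lemma preimage_cons_cyl_nil (a : Bool) : consSeq a ⁻¹' cylinder [] = Set.univ := by
  rw [cylinder_nil]; rfl

lemma preimage_cons_cyl (a b : Bool) (w : List Bool) :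
    consSeq a ⁻¹' cylinder (b :: w) = if a = b then cylinder w else ∅ := by
  ext x
  simp only [Set.mem_preimage, mem_cyl_cons, shift_cons]
  have h0 : consSeq a x 0 = a := rfl
  rw [h0]
  by_cases h : a = b <;> simp [h]

lemma measure_decomp [IsProbabilityMeasure μ]
    (hμ : ∀ w : List Bool, μ (cylinder w) = (1 / 2) ^ w.length) :
    μ = (1/2 : ℝ≥0∞) • Measure.map (consSeq false) μ
        + (1/2 : ℝ≥0∞) • Measure.map (consSeq true) μ := by
  haveI h0 : IsProbabilityMeasure (Measure.map (consSeq false) μ) :=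
    Measure.isProbabilityMeasure_map (measurable_consSeq false).aemeasurable
  haveI h1 : IsProbabilityMeasure (Measure.map (consSeq true) μ) :=
    Measure.isProbabilityMeasure_map (measurable_consSeq true).aemeasurable
  refine ext_of_generate_finite _ generateFrom_cylinders isPiSystem_cylinders ?_ ?_
  · rintro _ ⟨w, rfl⟩
    simp only [Measure.coe_add, Measure.coe_smul, Pi.add_apply, Pi.smul_apply, smul_eq_mul]
    rw [Measure.map_apply (measurable_consSeq false) (measurableSet_cylinder w),
        Measure.map_apply (measurable_consSeq true) (measurableSet_cylinder w)]
    cases w with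
    | nil =>
      rw [preimage_cons_cyl_nil, preimage_cons_cyl_nil, hμ]
      simp [ENNReal.inv_two_add_inv_two]
    | cons b w' =>
      rw [preimage_cons_cyl, preimage_cons_cyl]
      cases b <;> simp [hμ, pow_succ, mul_comm]
  · simp [ENNReal.inv_two_add_inv_two]

lemma map_cons_ac [IsProbabilityMeasure μ]
    (hμ : ∀ w : List Bool, μ (cylinder w) = (1 / 2) ^ w.length) (a : Bool) :
    Measure.map (consSeq a) μ ≪ μ := by
  intro s hs
  have hd := measure_decomp hμ
  have : μ s = (1/2 : ℝ≥0∞) * Measure.map (consSeq false) μ s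
      + (1/2 : ℝ≥0∞) * Measure.map (consSeq true) μ s := by
    conv_lhs => rw [hd]
    simp
  rw [hs] at this
  have h2 : (1/2 : ℝ≥0∞) * Measure.map (consSeq a) μ s = 0 := by
    cases a
    · exact le_antisymm (this ▸ le_self_add) bot_le
    · exact le_antisymm (this ▸ le_add_self) bot_le
  rcases mul_eq_zero.mp h2 with h | h
  · norm_num at h
  · exact h

lemma integral_decomp [IsProbabilityMeasure μ]
    (hμ : ∀ w : List Bool, μ (cylinder w) = (1 / 2) ^ w.length)
    (F : Ω → ℝ) (hF : Integrable F μ) :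
    ∫ x, F x ∂μ = (1/2 : ℝ) * ∫ x, F (consSeq false x) ∂μ
        + (1/2 : ℝ) * ∫ x, F (consSeq true x) ∂μ := by
  have hd := measure_decomp hμ
  have hle0 : (1/2 : ℝ≥0∞) • Measure.map (consSeq false) μ ≤ μ := by
    conv_rhs => rw [hd]
    exact Measure.le_add_right le_rfl
  have hle1 : (1/2 : ℝ≥0∞) • Measure.map (consSeq true) μ ≤ μ := by
    conv_rhs => rw [hd]
    exact Measure.le_add_left le_rfl
  have hF0 : Integrable F ((1/2 : ℝ≥0∞) • Measure.map (consSeq false) μ) :=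
    hF.mono_measure hle0
  have hF1 : Integrable F ((1/2 : ℝ≥0∞) • Measure.map (consSeq true) μ) :=
    hF.mono_measure hle1
  have hm0 : AEStronglyMeasurable F (Measure.map (consSeq false) μ) :=
    hF.aestronglyMeasurable.mono_ac (map_cons_ac hμ false)
  have hm1 : AEStronglyMeasurable F (Measure.map (consSeq true) μ) :=
    hF.aestronglyMeasurable.mono_ac (map_cons_ac hμ true)
  conv_lhs => rw [hd]
  rw [integral_add_measure hF0 hF1, integral_smul_measure, integral_smul_measure,
    integral_map (measurable_consSeq false).aemeasurable hm0,
    integral_map (measurable_consSeq true).aemeasurable hm1]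
  norm_num

section OpLemmas
open ContinuousLinearMap
variable {μ : Measure Ω}

lemma blockDiag_fst (A₁ A₂ : E μ →L[ℝ] E μ) (x : HS μ) :
    (blockDiag A₁ A₂ x).fst = A₁ x.fst := rfl
lemma blockDiag_snd (A₁ A₂ : E μ →L[ℝ] E μ) (x : HS μ) :
    (blockDiag A₁ A₂ x).snd = A₂ x.snd := rfl
lemma blockAntidiag_fst (A₁ A₂ : E μ →L[ℝ] E μ) (x : HS μ) :
    (blockAntidiag A₁ A₂ x).fst = A₁ x.snd := rfl
lemma blockAntidiag_snd (A₁ A₂ : E μ →L[ℝ] E μ) (x : HS μ) :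
    (blockAntidiag A₁ A₂ x).snd = A₂ x.fst := rfl

lemma commD_eq (K L A : E μ →L[ℝ] E μ) :
    commD K L A = blockAntidiag (K.comp A - A.comp K) (L.comp A - A.comp L) := by
  ext x : 1
  exact (WithLp.equiv 2 _).injective (Prod.ext rfl rfl)

lemma norm_blockAntidiag_apply_sq (A₁ A₂ : E μ →L[ℝ] E μ) (x : HS μ) :
    ‖blockAntidiag A₁ A₂ x‖ ^ 2 = ‖A₁ x.snd‖ ^ 2 + ‖A₂ x.fst‖ ^ 2 := by
  rw [WithLp.prod_norm_sq_eq_of_L2, blockAntidiag_fst, blockAntidiag_snd]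

lemma norm_blockAntidiag (A₁ A₂ : E μ →L[ℝ] E μ) :
    ‖blockAntidiag A₁ A₂‖ = max ‖A₁‖ ‖A₂‖ := by
  set M := max ‖A₁‖ ‖A₂‖ with hM
  have hM0 : 0 ≤ M := le_trans (norm_nonneg A₁) (le_max_left _ _)
  apply le_antisymm
  · refine opNorm_le_bound _ hM0 fun x => ?_
    have h2 : ‖blockAntidiag A₁ A₂ x‖ ^ 2 ≤ (M * ‖x‖) ^ 2 := by
      have e1 : ‖A₁ x.snd‖ ≤ M * ‖x.snd‖ :=
        le_trans (A₁.le_opNorm _) (by gcongr; exact le_max_left _ _)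
      have e2 : ‖A₂ x.fst‖ ≤ M * ‖x.fst‖ :=
        le_trans (A₂.le_opNorm _) (by gcongr; exact le_max_right _ _)
      have e1' : ‖A₁ x.snd‖ ^ 2 ≤ M ^ 2 * ‖x.snd‖ ^ 2 := by
        rw [← mul_pow]; exact pow_le_pow_left₀ (norm_nonneg _) e1 2
      have e2' : ‖A₂ x.fst‖ ^ 2 ≤ M ^ 2 * ‖x.fst‖ ^ 2 := by
        rw [← mul_pow]; exact pow_le_pow_left₀ (norm_nonneg _) e2 2
      have hx : ‖x‖ ^ 2 = ‖x.fst‖ ^ 2 + ‖x.snd‖ ^ 2 := WithLp.prod_norm_sq_eq_of_L2 x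
      rw [norm_blockAntidiag_apply_sq, mul_pow, hx]
      linarith
    exact (pow_le_pow_iff_left₀ (norm_nonneg _) (mul_nonneg hM0 (norm_nonneg x)) two_ne_zero).mp h2
  · refine max_le ?_ ?_
    · refine opNorm_le_bound _ (norm_nonneg _) fun ψ => ?_
      set x : HS μ := (WithLp.equiv 2 (E μ × E μ)).symm (0, ψ) with hx
      have hfst : x.fst = 0 := rfl
      have hsnd : x.snd = ψ := rfl
      have h1 : ‖A₁ ψ‖ ^ 2 ≤ ‖blockAntidiag A₁ A₂ x‖ ^ 2 := by
        rw [norm_blockAntidiag_apply_sq, hfst, hsnd]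
        have : (0:ℝ) ≤ ‖A₂ (0 : E μ)‖ ^ 2 := sq_nonneg _
        linarith
      have h3 : ‖A₁ ψ‖ ≤ ‖blockAntidiag A₁ A₂ x‖ :=
        (pow_le_pow_iff_left₀ (norm_nonneg _) (norm_nonneg _) two_ne_zero).mp h1
      calc ‖A₁ ψ‖ ≤ ‖blockAntidiag A₁ A₂ x‖ := h3
        _ ≤ ‖blockAntidiag A₁ A₂‖ * ‖x‖ := le_opNorm _ _
        _ = ‖blockAntidiag A₁ A₂‖ * ‖ψ‖ := by
            rw [hx, WithLp.equiv_symm_apply, WithLp.norm_toLp_snd]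
    · refine opNorm_le_bound _ (norm_nonneg _) fun φ => ?_
      set x : HS μ := (WithLp.equiv 2 (E μ × E μ)).symm (φ, 0) with hx
      have hfst : x.fst = φ := rfl
      have hsnd : x.snd = 0 := rfl
      have h1 : ‖A₂ φ‖ ^ 2 ≤ ‖blockAntidiag A₁ A₂ x‖ ^ 2 := by
        rw [norm_blockAntidiag_apply_sq, hfst, hsnd]
        have : (0:ℝ) ≤ ‖A₁ (0 : E μ)‖ ^ 2 := sq_nonneg _
        linarith
      have h3 : ‖A₂ φ‖ ≤ ‖blockAntidiag A₁ A₂ x‖ :=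
        (pow_le_pow_iff_left₀ (norm_nonneg _) (norm_nonneg _) two_ne_zero).mp h1
      calc ‖A₂ φ‖ ≤ ‖blockAntidiag A₁ A₂ x‖ := h3
        _ ≤ ‖blockAntidiag A₁ A₂‖ * ‖x‖ := le_opNorm _ _
        _ = ‖blockAntidiag A₁ A₂‖ * ‖φ‖ := by
            rw [hx, WithLp.equiv_symm_apply, WithLp.norm_toLp_fst]

end OpLemmas

lemma mem_cyl_ofFn (x₀ : Ω) (n : ℕ) : x₀ ∈ cylinder (List.ofFn fun i : Fin n => x₀ i) := by
  rw [mem_cyl]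
  intro i hi
  simp only [List.length_ofFn] at hi
  simp [List.getElem_ofFn]

lemma exists_cylinder_nhd (G : C(Ω, ℝ)) (x₀ : Ω) {c : ℝ} (hc : c < G x₀) :
    ∃ w : List Bool, x₀ ∈ cylinder w ∧ ∀ x ∈ cylinder w, c < G x := by
  by_contra hcon
  push_neg at hcon
  choose xs hxs hle using fun n => hcon (List.ofFn fun i : Fin n => x₀ i) (mem_cyl_ofFn x₀ n)
  have htend : Filter.Tendsto xs Filter.atTop (nhds x₀) := by
    rw [tendsto_pi_nhds]
    intro i
    refine Filter.Tendsto.congr' ?_ (tendsto_const_nhds (x := x₀ i))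
    filter_upwards [Filter.eventually_ge_atTop (i + 1)] with n hn
    have hi : i < (List.ofFn fun j : Fin n => x₀ j).length := by
      simp only [List.length_ofFn]; omega
    have := (mem_cyl _ _).mp (hxs n) i hi
    rw [this, List.getElem_ofFn]
  have htendG : Filter.Tendsto (fun n => G (xs n)) Filter.atTop (nhds (G x₀)) :=
    (G.continuous.tendsto x₀).comp htend
  have : G x₀ ≤ c := le_of_tendsto htendG (Filter.Eventually.of_forall hle)
  linarith

lemma ciSup_sqrt_eq (G : C(Ω, ℝ)) (x₀ : Ω) (hmax : ∀ x, G x ≤ G x₀) :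
    (⨆ x : Ω, Real.sqrt (G x)) = Real.sqrt (G x₀) := by
  apply le_antisymm
  · exact ciSup_le fun x => Real.sqrt_le_sqrt (hmax x)
  · refine le_ciSup (f := fun x => Real.sqrt (G x)) ⟨Real.sqrt (G x₀), ?_⟩ x₀
    rintro y ⟨x, rfl⟩
    exact Real.sqrt_le_sqrt (hmax x)


lemma norm_sq_eq_integral (g : E μ) : ‖g‖ ^ 2 = ∫ x, ((g : Ω → ℝ) x) ^ 2 ∂μ := by
  rw [← real_inner_self_eq_norm_sq, MeasureTheory.L2.inner_def]
  refine integral_congr_ae (Filter.Eventually.of_forall fun x => ?_)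
  simp [RCLike.inner_apply, conj_trivial, sq]

lemma integrable_sq (g : E μ) : Integrable (fun x => ((g : Ω → ℝ) x) ^ 2) μ := by
  have h := MeasureTheory.L2.integrable_inner (𝕜 := ℝ) g g
  refine h.congr (Filter.Eventually.of_forall fun x => ?_)
  simp [RCLike.inner_apply, conj_trivial, sq]

end Aux

/-- `‖[D, π(M_f)]‖ = |√(L(|Kf − f|²))|_∞
= sup_x √(|f(x) − f(0x)|²/2 + |f(x) − f(1x)|²/2)`. -/
theorem stmt15
    (μ : Measure Ω) [IsProbabilityMeasure μ]
    (hμ : ∀ w : List Bool, μ (cylinder w) = (1 / 2) ^ w.length)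
    (K L : E μ →L[ℝ] E μ)
    (hK : ∀ g : E μ, (K g : Ω → ℝ) =ᵐ[μ] fun x => g (shiftMap x))
    (hL : ∀ g : E μ, (L g : Ω → ℝ) =ᵐ[μ]
      fun x => (g (consSeq false x) + g (consSeq true x)) / 2)
    (hadj : ContinuousLinearMap.adjoint K = L)
    (f : C(Ω, ℝ)) (Mf : E μ →L[ℝ] E μ)
    (hMf : ∀ g : E μ, (Mf g : Ω → ℝ) =ᵐ[μ] fun x => f x * g x) :
    ‖commD K L Mf‖ = (⨆ x : Ω, Real.sqrt (ruelleC ((koopmanC f - f) ^ 2) x)) ∧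
    (⨆ x : Ω, Real.sqrt (ruelleC ((koopmanC f - f) ^ 2) x)) =
      ⨆ x : Ω, Real.sqrt ((f x - f (consSeq false x)) ^ 2 / 2
        + (f x - f (consSeq true x)) ^ 2 / 2) := by
  classical
  set Hc : C(Ω, ℝ) := (koopmanC f - f) ^ 2 with hHc
  have hHval : ∀ x, Hc x = (f (shiftMap x) - f x) ^ 2 := by
    intro x
    simp [hHc, koopmanC, sq]
  set G : C(Ω, ℝ) := ruelleC Hc with hGdef
  have hGval : ∀ x, G x = (Hc (consSeq false x) + Hc (consSeq true x)) / 2 := fun x => rfl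
  have hG0 : ∀ x, 0 ≤ G x := by
    intro x
    rw [hGval, hHval, hHval]
    positivity
  -- maximizer
  obtain ⟨x₀, -, hx₀⟩ := isCompact_univ.exists_isMaxOn Set.univ_nonempty
    (G.continuous.continuousOn)
  have hmax : ∀ x, G x ≤ G x₀ := fun x => hx₀ (Set.mem_univ x)
  -- self-adjointness of Mf
  have hMfadj : ContinuousLinearMap.adjoint Mf = Mf := by
    refine ((ContinuousLinearMap.eq_adjoint_iff Mf Mf).mpr ?_).symm
    intro g h
    rw [MeasureTheory.L2.inner_def, MeasureTheory.L2.inner_def]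
    refine integral_congr_ae ?_
    filter_upwards [hMf g, hMf h] with x h1 h2
    simp only [RCLike.inner_apply, conj_trivial, h1, h2]
    ring
  set T : E μ →L[ℝ] E μ := K.comp Mf - Mf.comp K with hTdef
  -- the two blocks have the same norm
  have hadjT : ContinuousLinearMap.adjoint T = -(L.comp Mf - Mf.comp L) := by
    rw [hTdef, map_sub, ContinuousLinearMap.adjoint_comp, ContinuousLinearMap.adjoint_comp,
      hadj, hMfadj]
    abel
  have hnormeq : ‖L.comp Mf - Mf.comp L‖ = ‖T‖ := by
    rw [← norm_neg, ← hadjT]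
    exact ContinuousLinearMap.adjoint.norm_map T
  -- a.e. representation of T g
  have hshiftMP : MeasurePreserving shiftMap μ μ := ⟨measurable_shiftMap, map_shift hμ⟩
  have hT : ∀ g : E μ, (T g : Ω → ℝ) =ᵐ[μ]
      fun x => (f (shiftMap x) - f x) * (g : Ω → ℝ) (shiftMap x) := by
    intro g
    have e0 : (T g : Ω → ℝ) =ᵐ[μ] fun x =>
        (K (Mf g) : Ω → ℝ) x - (Mf (K g) : Ω → ℝ) x := by
      have : T g = K (Mf g) - Mf (K g) := by
        simp [hTdef, ContinuousLinearMap.sub_apply, ContinuousLinearMap.comp_apply]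
      rw [this]
      exact Lp.coeFn_sub _ _
    have e2 : ((Mf g : Ω → ℝ) ∘ shiftMap) =ᵐ[μ]
        ((fun x => f x * (g : Ω → ℝ) x) ∘ shiftMap) := by
      refine ae_eq_comp measurable_shiftMap.aemeasurable ?_
      rw [map_shift hμ]
      exact hMf g
    filter_upwards [e0, hK (Mf g), e2, hMf (K g), hK g] with x a0 a1 a2 a3 a4
    rw [a0, a1, a3, a4]
    have a2' : (Mf g : Ω → ℝ) (shiftMap x) = f (shiftMap x) * (g : Ω → ℝ) (shiftMap x) := a2
    rw [a2']
    ring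
  -- key identity
  have key : ∀ g : E μ, ‖T g‖ ^ 2 = ∫ x, G x * ((g : Ω → ℝ) x) ^ 2 ∂μ := by
    intro g
    have hg2 : Integrable (fun x => ((g : Ω → ℝ) x) ^ 2) μ := integrable_sq g
    have hgs2 : Integrable (fun x => ((g : Ω → ℝ) (shiftMap x)) ^ 2) μ :=
      (hshiftMP.integrable_comp hg2.aestronglyMeasurable).mpr hg2
    have hF : Integrable (fun x => Hc x * ((g : Ω → ℝ) (shiftMap x)) ^ 2) μ :=
      hgs2.bdd_mul Hc.continuous.aestronglyMeasurable (Filter.Eventually.of_forall fun x => Hc.norm_coe_le_norm x)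
    have h1 : ‖T g‖ ^ 2 = ∫ x, Hc x * ((g : Ω → ℝ) (shiftMap x)) ^ 2 ∂μ := by
      rw [norm_sq_eq_integral (T g)]
      refine integral_congr_ae ?_
      filter_upwards [hT g] with x hx
      rw [hx, hHval]
      ring
    have h2 := integral_decomp hμ _ hF
    have hu : ∀ a : Bool, Integrable (fun x => Hc (consSeq a x) * ((g : Ω → ℝ) x) ^ 2) μ := by
      intro a
      exact hg2.bdd_mul (Hc.continuous.comp (continuous_consSeq a)).aestronglyMeasurable
        (Filter.Eventually.of_forall fun x => Hc.norm_coe_le_norm (consSeq a x))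
    have h3 : ∫ x, G x * ((g : Ω → ℝ) x) ^ 2 ∂μ
        = (1/2 : ℝ) * ∫ x, Hc (consSeq false x) * ((g : Ω → ℝ) x) ^ 2 ∂μ
          + (1/2 : ℝ) * ∫ x, Hc (consSeq true x) * ((g : Ω → ℝ) x) ^ 2 ∂μ := by
      rw [← integral_const_mul, ← integral_const_mul,
        ← integral_add ((hu false).const_mul _) ((hu true).const_mul _)]
      refine integral_congr_ae (Filter.Eventually.of_forall fun x => ?_)
      simp only [hGval]
      ring
    rw [h1, h2, h3]
    rfl
  -- upper bound
  have hTle : ‖T‖ ≤ Real.sqrt (G x₀) := by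
    refine ContinuousLinearMap.opNorm_le_bound _ (Real.sqrt_nonneg _) fun g => ?_
    have hg2 : Integrable (fun x => ((g : Ω → ℝ) x) ^ 2) μ := integrable_sq g
    have hGg2 : Integrable (fun x => G x * ((g : Ω → ℝ) x) ^ 2) μ :=
      hg2.bdd_mul G.continuous.aestronglyMeasurable (Filter.Eventually.of_forall fun x => G.norm_coe_le_norm x)
    have h1 : ‖T g‖ ^ 2 ≤ G x₀ * ‖g‖ ^ 2 := by
      rw [key g, norm_sq_eq_integral g, ← integral_const_mul]
      refine integral_mono hGg2 (hg2.const_mul _) fun x => ?_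
      exact mul_le_mul_of_nonneg_right (hmax x) (sq_nonneg _)
    calc ‖T g‖ = Real.sqrt (‖T g‖ ^ 2) := (Real.sqrt_sq (norm_nonneg _)).symm
      _ ≤ Real.sqrt (G x₀ * ‖g‖ ^ 2) := Real.sqrt_le_sqrt h1
      _ = Real.sqrt (G x₀) * ‖g‖ := by
          rw [Real.sqrt_mul (hG0 x₀), Real.sqrt_sq (norm_nonneg _)]
  -- lower bound
  have hTge : Real.sqrt (G x₀) ≤ ‖T‖ := by
    rw [← Real.sqrt_sq (norm_nonneg T)]
    refine Real.sqrt_le_sqrt ?_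
    refine le_of_forall_pos_le_add fun ε hε => ?_
    obtain ⟨w, -, hw⟩ := exists_cylinder_nhd G x₀ (show G x₀ - ε < G x₀ by linarith)
    set s := cylinder w with hs_def
    have hs := measurableSet_cylinder w
    have hμs_ne_top : μ s ≠ ⊤ := by
      rw [hμ w]
      exact ENNReal.pow_ne_top (by norm_num)
    have hμs_pos : 0 < (μ s).toReal := by
      refine ENNReal.toReal_pos ?_ hμs_ne_top
      rw [hμ w]
      exact pow_ne_zero _ (by norm_num)
    set g : E μ := indicatorConstLp 2 hs hμs_ne_top (1 : ℝ) with hg_def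
    have hgcoe : (g : Ω → ℝ) =ᵐ[μ] s.indicator (fun _ => 1) := indicatorConstLp_coeFn
    have hgsq : (fun x => ((g : Ω → ℝ) x) ^ 2) =ᵐ[μ] s.indicator (fun _ => 1) := by
      filter_upwards [hgcoe] with x hx
      rw [hx]
      by_cases hxs : x ∈ s <;> simp [hxs]
    have hgnorm_sq : ‖g‖ ^ 2 = (μ s).toReal := by
      rw [norm_sq_eq_integral g, integral_congr_ae hgsq, integral_indicator_const _ hs,
        smul_eq_mul, mul_one, measureReal_def]
    have hGint : Integrable (fun x => G x) μ := by
      refine Integrable.mono' (integrable_const ‖G‖) G.continuous.aestronglyMeasurable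
        (Filter.Eventually.of_forall fun x => G.norm_coe_le_norm x)
    have hint : ∫ x, G x * ((g : Ω → ℝ) x) ^ 2 ∂μ = ∫ x in s, G x ∂μ := by
      rw [← integral_indicator hs]
      refine integral_congr_ae ?_
      filter_upwards [hgsq] with x hx
      rw [hx]
      by_cases hxs : x ∈ s <;> simp [hxs, ← hs_def]
    have hlow : (G x₀ - ε) * (μ s).toReal ≤ ∫ x in s, G x ∂μ := by
      calc (G x₀ - ε) * (μ s).toReal = ∫ _ in s, (G x₀ - ε) ∂μ := by
            rw [setIntegral_const, measureReal_def, smul_eq_mul, mul_comm]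
        _ ≤ ∫ x in s, G x ∂μ := by
            refine setIntegral_mono_on ?_ hGint.integrableOn hs fun x hx => (hw x hx).le
            exact integrableOn_const hμs_ne_top (by simp)
    have h1 : (G x₀ - ε) * (μ s).toReal ≤ ‖T g‖ ^ 2 := by
      rw [key g, hint]
      exact hlow
    have h2 : ‖T g‖ ^ 2 ≤ ‖T‖ ^ 2 * (μ s).toReal := by
      have h3 := pow_le_pow_left₀ (norm_nonneg _) (T.le_opNorm g) 2
      rwa [mul_pow, hgnorm_sq] at h3
    have h4 : G x₀ - ε ≤ ‖T‖ ^ 2 :=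
      le_of_mul_le_mul_right (h1.trans h2) hμs_pos
    linarith
  have hTnorm : ‖T‖ = Real.sqrt (G x₀) := le_antisymm hTle hTge
  have hsup : (⨆ x : Ω, Real.sqrt (G x)) = Real.sqrt (G x₀) := ciSup_sqrt_eq G x₀ hmax
  constructor
  · rw [commD_eq, norm_blockAntidiag, ← hTdef, hnormeq, max_self, hTnorm, hsup]
  · refine iSup_congr fun x => ?_
    congr 1
    rw [hGval, hHval, hHval]
    show ((f x - f (consSeq false x)) ^ 2 + (f x - f (consSeq true x)) ^ 2) / 2 = _
    ring
end

section
/- For every continuous function f : Ω → ℝ, if |Kf − f|_∞ ≤ 1 then ‖[D, π(M_f)]‖ ≤ 1. -/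
open MeasureTheory ContinuousLinearMap
open scoped RealInnerProductSpace InnerProductSpace ENNReal

namespace Stmt16Aux


lemma mem_cylinder {w : List Bool} {x : Ω} :
    x ∈ _root_.cylinder w ↔ ∀ (n : ℕ) (h : n < w.length), x n = w[n] := by
  constructor
  · intro hx n h; exact hx ⟨n, h⟩
  · intro hx i; exact hx i i.isLt

lemma cylinder_nil : _root_.cylinder ([] : List Bool) = Set.univ := by
  ext x; simp [mem_cylinder]

lemma measurableSet_cylinder (w : List Bool) : MeasurableSet (_root_.cylinder w) := by
  have : _root_.cylinder w = ⋂ i : Fin w.length, (fun x : Ω => x (i : ℕ)) ⁻¹' {w.get i} := by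
    ext x; simp [_root_.cylinder, Set.mem_iInter]
  rw [this]
  exact MeasurableSet.iInter fun i =>
    (measurable_pi_apply (i : ℕ)) (measurableSet_singleton _)

lemma eval_eq_iUnion (i : ℕ) (b : Bool) :
    {x : Ω | x i = b} = ⋃ w ∈ {l : List Bool | l.length = i}, _root_.cylinder (w ++ [b]) := by
  ext x
  simp only [Set.mem_setOf_eq, Set.mem_iUnion]
  constructor
  · intro hx
    refine ⟨List.ofFn (fun j : Fin i => x j), by simp, ?_⟩
    rw [mem_cylinder]
    intro n hn
    have hlen : (List.ofFn (fun j : Fin i => x j)).length = i := by simp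
    rcases lt_or_ge n i with h | h
    · rw [List.getElem_append_left (by omega)]
      simp [List.getElem_ofFn]
    · have hni : n = i := by simp [hlen] at hn; omega
      subst hni
      rw [List.getElem_append_right (by omega)]
      simpa [hlen] using hx
  · rintro ⟨w, hw, hx⟩
    rw [mem_cylinder] at hx
    have := hx i (by simp [hw])
    rw [List.getElem_append_right (by omega)] at this
    simpa [hw] using this

lemma generateFrom_cylinders :
    (inferInstance : MeasurableSpace Ω) =
      MeasurableSpace.generateFrom {s | ∃ w : List Bool, s = _root_.cylinder w} := by
  apply le_antisymm
  · rw [show (inferInstance : MeasurableSpace Ω) = MeasurableSpace.pi from rfl,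
      MeasurableSpace.pi]
    apply iSup_le
    intro i
    rw [← measurable_iff_comap_le]
    refine @measurable_to_countable' Bool Ω _ _ (MeasurableSpace.generateFrom _) _ ?_
    intro b
    have : (fun x : Ω => x i) ⁻¹' {b} = {x : Ω | x i = b} := by ext x; simp
    rw [this, eval_eq_iUnion]
    exact MeasurableSet.biUnion (Set.to_countable _)
      (fun w _ => MeasurableSpace.measurableSet_generateFrom ⟨w ++ [b], rfl⟩)
  · rw [MeasurableSpace.generateFrom_le_iff]
    rintro s ⟨w, rfl⟩
    exact measurableSet_cylinder w

lemma isPiSystem_cylinders : IsPiSystem {s | ∃ w : List Bool, s = _root_.cylinder w} := by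
  have key : ∀ w v : List Bool, w.length ≤ v.length →
      (_root_.cylinder w ∩ _root_.cylinder v).Nonempty →
      _root_.cylinder w ∩ _root_.cylinder v = _root_.cylinder v := by
    intro w v hle ⟨z, hzw, hzv⟩
    apply Set.inter_eq_self_of_subset_right
    intro y hy
    rw [mem_cylinder] at *
    intro n hn
    rw [hy n (by omega), ← hzv n (by omega), hzw n hn]
  rintro s ⟨w, rfl⟩ t ⟨v, rfl⟩ hne
  rcases le_or_gt w.length v.length with h | h
  · rw [key w v h hne]; exact ⟨v, rfl⟩
  · rw [Set.inter_comm] at hne ⊢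
    rw [key v w h.le hne]; exact ⟨w, rfl⟩

lemma measurable_shiftMap : Measurable shiftMap :=
  measurable_pi_lambda _ fun n => measurable_pi_apply (n + 1)

lemma shift_preimage (w : List Bool) :
    shiftMap ⁻¹' _root_.cylinder w =
      _root_.cylinder (false :: w) ∪ _root_.cylinder (true :: w) := by
  ext x
  simp only [Set.mem_preimage, Set.mem_union, mem_cylinder]
  constructor
  · intro hx
    cases hb : x 0
    · left
      intro n hn
      cases n with
      | zero => simpa using hb
      | succ k => simpa [shiftMap] using hx k (by simpa using hn)
    · right
      intro n hn
      cases n with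
      | zero => simpa using hb
      | succ k => simpa [shiftMap] using hx k (by simpa using hn)
  · rintro (hx | hx) <;>
    · intro n hn
      exact hx (n + 1) (by simpa using hn)

lemma map_shift (μ : Measure Ω) [IsProbabilityMeasure μ]
    (hμ : ∀ w : List Bool, μ (_root_.cylinder w) = (1 / 2) ^ w.length) :
    μ.map shiftMap = μ := by
  haveI : IsProbabilityMeasure (μ.map shiftMap) :=
    Measure.isProbabilityMeasure_map measurable_shiftMap.aemeasurable
  refine ext_of_generate_finite _ generateFrom_cylinders isPiSystem_cylinders ?_ (by simp)
  rintro s ⟨w, rfl⟩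
  rw [Measure.map_apply measurable_shiftMap (measurableSet_cylinder w), shift_preimage,
    measure_union ?_ (measurableSet_cylinder _), hμ, hμ, hμ]
  · simp only [List.length_cons, pow_succ]
    rw [← mul_add, ENNReal.add_halves]
    simp
  · rw [Set.disjoint_left]
    intro x hx hx'
    rw [mem_cylinder] at hx hx'
    have h1 := hx 0 (by simp)
    have h2 := hx' 0 (by simp)
    simp at h1 h2
    rw [h1] at h2
    exact Bool.false_ne_true h2

variable {μ : Measure Ω} [IsProbabilityMeasure μ]

-- K is an isometry
lemma norm_K_apply (hmap : Measure.map shiftMap μ = μ) (K : E μ →L[ℝ] E μ)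
    (hK : ∀ g : E μ, (K g : Ω → ℝ) =ᵐ[μ] fun x => g (shiftMap x)) (g : E μ) :
    ‖K g‖ = ‖g‖ := by
  have h1 : ⟪K g, K g⟫_ℝ = ⟪g, g⟫_ℝ := by
    rw [L2.inner_def, L2.inner_def]
    have hcongr : (fun a => ⟪(K g : Ω → ℝ) a, (K g : Ω → ℝ) a⟫_ℝ)
        =ᵐ[μ] fun a => g (shiftMap a) * g (shiftMap a) := by
      filter_upwards [hK g] with a ha
      simp [ha, real_inner_comm]
      ring
    rw [integral_congr_ae hcongr]
    have : ∫ a, g (shiftMap a) * g (shiftMap a) ∂μ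
        = ∫ y, g y * g y ∂(μ.map shiftMap) := by
      rw [integral_map measurable_shiftMap.aemeasurable]
      rw [hmap]
      exact ((Lp.aestronglyMeasurable g).mul (Lp.aestronglyMeasurable g))
    rw [this, hmap]
    apply integral_congr_ae
    filter_upwards with a
    simp [real_inner_comm]
    ring
  have h2 : ‖K g‖ ^ 2 = ‖g‖ ^ 2 := by
    rw [← real_inner_self_eq_norm_sq, ← real_inner_self_eq_norm_sq, h1]
  nlinarith [norm_nonneg (K g), norm_nonneg g]


set_option linter.unusedSectionVars false

-- self-adjointness of Mf
lemma adjoint_Mf (f : C(Ω, ℝ)) (Mf : E μ →L[ℝ] E μ)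
    (hMf : ∀ g : E μ, (Mf g : Ω → ℝ) =ᵐ[μ] fun x => f x * g x) :
    ContinuousLinearMap.adjoint Mf = Mf := by
  symm
  rw [ContinuousLinearMap.eq_adjoint_iff]
  intro g h
  rw [L2.inner_def, L2.inner_def]
  apply integral_congr_ae
  filter_upwards [hMf g, hMf h] with a ha hb
  simp [ha, hb, real_inner_comm]
  ring

-- bound on the commutator K Mf - Mf K
lemma norm_commK_le (hmap : Measure.map shiftMap μ = μ)
    (K : E μ →L[ℝ] E μ)
    (hK : ∀ g : E μ, (K g : Ω → ℝ) =ᵐ[μ] fun x => g (shiftMap x))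
    (f : C(Ω, ℝ)) (Mf : E μ →L[ℝ] E μ)
    (hMf : ∀ g : E μ, (Mf g : Ω → ℝ) =ᵐ[μ] fun x => f x * g x)
    (h : ‖koopmanC f - f‖ ≤ 1) :
    ‖K.comp Mf - Mf.comp K‖ ≤ 1 := by
  have hbound : ∀ x : Ω, |f (shiftMap x) - f x| ≤ 1 := by
    intro x
    calc |f (shiftMap x) - f x| = ‖(koopmanC f - f) x‖ := by
          simp [koopmanC, Real.norm_eq_abs]
      _ ≤ ‖koopmanC f - f‖ := ContinuousMap.norm_coe_le_norm _ x
      _ ≤ 1 := h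
  apply ContinuousLinearMap.opNorm_le_bound _ zero_le_one
  intro g
  rw [one_mul]
  -- a.e. identity for the commutator applied to g
  have hae : ((K.comp Mf - Mf.comp K) g : Ω → ℝ)
      =ᵐ[μ] fun x => (f (shiftMap x) - f x) * g (shiftMap x) := by
    have e0 : ((K.comp Mf - Mf.comp K) g : Ω → ℝ)
        =ᵐ[μ] (K (Mf g) : Ω → ℝ) - (Mf (K g) : Ω → ℝ) := by
      have : (K.comp Mf - Mf.comp K) g = K (Mf g) - Mf (K g) := by
        simp [ContinuousLinearMap.sub_apply]
      rw [this]
      exact Lp.coeFn_sub _ _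
    have e1 : (K (Mf g) : Ω → ℝ) =ᵐ[μ] fun x => f (shiftMap x) * g (shiftMap x) := by
      refine (hK (Mf g)).trans ?_
      have : (Mf g : Ω → ℝ) ∘ shiftMap
          =ᵐ[μ] (fun x => f x * g x) ∘ shiftMap := by
        apply ae_eq_comp measurable_shiftMap.aemeasurable
        rw [hmap]
        exact hMf g
      exact this
    have e2 : (Mf (K g) : Ω → ℝ) =ᵐ[μ] fun x => f x * g (shiftMap x) := by
      refine (hMf (K g)).trans ?_
      filter_upwards [hK g] with a ha
      rw [ha]
    filter_upwards [e0, e1, e2] with a h0 h1 h2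
    rw [h0]
    simp only [Pi.sub_apply]
    rw [h1, h2]
    ring
  have hle : ‖(K.comp Mf - Mf.comp K) g‖ ≤ ‖K g‖ := by
    rw [Lp.norm_def, Lp.norm_def]
    refine ENNReal.toReal_mono (Lp.eLpNorm_ne_top _) (eLpNorm_mono_ae ?_)
    filter_upwards [hae, hK g] with a ha hKa
    rw [ha, hKa]
    rw [Real.norm_eq_abs, Real.norm_eq_abs, abs_mul]
    calc |f (shiftMap a) - f a| * |g (shiftMap a)| ≤ 1 * |g (shiftMap a)| := by
          apply mul_le_mul_of_nonneg_right (hbound a) (abs_nonneg _)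
      _ = |g (shiftMap a)| := one_mul _
  rw [norm_K_apply hmap K hK g] at hle
  exact hle


lemma commD_eq (K L A : E μ →L[ℝ] E μ) :
    commD K L A = blockAntidiag (K.comp A - A.comp K) (L.comp A - A.comp L) := by
  apply ContinuousLinearMap.ext
  intro v
  simp [commD, dirac, diagRep, blockDiag, blockAntidiag, ContinuousLinearMap.sub_apply,
    ContinuousLinearMap.comp_apply, ContinuousLinearMap.prod_apply, Prod.ext_iff,
    map_sub]
  constructor <;> abel_nf

lemma norm_blockAntidiag_le {A₁ A₂ : E μ →L[ℝ] E μ} (h₁ : ‖A₁‖ ≤ 1) (h₂ : ‖A₂‖ ≤ 1) :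
    ‖blockAntidiag A₁ A₂‖ ≤ 1 := by
  apply ContinuousLinearMap.opNorm_le_bound _ zero_le_one
  intro v
  rw [one_mul]
  have hsq : ‖blockAntidiag A₁ A₂ v‖ ^ 2 ≤ ‖v‖ ^ 2 := by
    rw [WithLp.prod_norm_sq_eq_of_L2, WithLp.prod_norm_sq_eq_of_L2]
    have hfst : (blockAntidiag A₁ A₂ v).fst = A₁ v.snd := rfl
    have hsnd : (blockAntidiag A₁ A₂ v).snd = A₂ v.fst := rfl
    rw [hfst, hsnd]
    have b1 : ‖A₁ v.snd‖ ≤ ‖v.snd‖ := by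
      calc ‖A₁ v.snd‖ ≤ ‖A₁‖ * ‖v.snd‖ := ContinuousLinearMap.le_opNorm _ _
        _ ≤ 1 * ‖v.snd‖ := by apply mul_le_mul_of_nonneg_right h₁ (norm_nonneg _)
        _ = ‖v.snd‖ := one_mul _
    have b2 : ‖A₂ v.fst‖ ≤ ‖v.fst‖ := by
      calc ‖A₂ v.fst‖ ≤ ‖A₂‖ * ‖v.fst‖ := ContinuousLinearMap.le_opNorm _ _
        _ ≤ 1 * ‖v.fst‖ := by apply mul_le_mul_of_nonneg_right h₂ (norm_nonneg _)
        _ = ‖v.fst‖ := one_mul _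
    nlinarith [norm_nonneg (A₁ v.snd), norm_nonneg (A₂ v.fst), norm_nonneg v.fst,
      norm_nonneg v.snd]
  nlinarith [norm_nonneg (blockAntidiag A₁ A₂ v), norm_nonneg v]

end Stmt16Aux


/-- If `|Kf − f|_∞ ≤ 1` then `‖[D, π(M_f)]‖ ≤ 1`. -/
theorem stmt16
    (μ : Measure Ω) [IsProbabilityMeasure μ]
    (hμ : ∀ w : List Bool, μ (cylinder w) = (1 / 2) ^ w.length)
    (K L : E μ →L[ℝ] E μ)
    (hK : ∀ g : E μ, (K g : Ω → ℝ) =ᵐ[μ] fun x => g (shiftMap x))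
    (hL : ∀ g : E μ, (L g : Ω → ℝ) =ᵐ[μ]
      fun x => (g (consSeq false x) + g (consSeq true x)) / 2)
    (hadj : ContinuousLinearMap.adjoint K = L)
    (f : C(Ω, ℝ)) (Mf : E μ →L[ℝ] E μ)
    (hMf : ∀ g : E μ, (Mf g : Ω → ℝ) =ᵐ[μ] fun x => f x * g x)
    (h : ‖koopmanC f - f‖ ≤ 1) :
    ‖commD K L Mf‖ ≤ 1 := by
  have hmap : Measure.map shiftMap μ = μ := Stmt16Aux.map_shift μ hμ
  have hKbd : ‖K.comp Mf - Mf.comp K‖ ≤ 1 :=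
    Stmt16Aux.norm_commK_le hmap K hK f Mf hMf h
  have hMfadj : ContinuousLinearMap.adjoint Mf = Mf := Stmt16Aux.adjoint_Mf f Mf hMf
  have hadj2 : ContinuousLinearMap.adjoint (K.comp Mf - Mf.comp K)
      = Mf.comp L - L.comp Mf := by
    rw [map_sub, ContinuousLinearMap.adjoint_comp, ContinuousLinearMap.adjoint_comp,
      hMfadj, hadj]
  have hLbd : ‖L.comp Mf - Mf.comp L‖ ≤ 1 := by
    have : L.comp Mf - Mf.comp L = -(Mf.comp L - L.comp Mf) := by abel
    rw [this, norm_neg, ← hadj2]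
    rw [LinearIsometryEquiv.norm_map]
    exact hKbd
  rw [Stmt16Aux.commD_eq K L Mf]
  exact Stmt16Aux.norm_blockAntidiag_le hKbd hLbd
end
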